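/- Let t = (n_t, g_t, P_t) be a k-creature with n_t ≥ 2, and let g' be a partial function from {0,…,N−1} to {0,1} with g_t ⊆ g' and |dom(g') ∖ dom(g_t)| ≤ 2^(k+3). Suppose r_f ∈ [0,1] (for f ∈ P_t) satisfy 2^(−2^(k+3)) ≤ a, where a = 2^(|dom(g')|−N) · Σ{ r_f : f ∈ P_t, g' ⊆ f }. Then there is a k-creature s = (n_s, g_s, P_s) ∈ Σ*(t) such that: (α) n_s = n_t − 1 and g' ⊆ g_s and P_s = { f ∈ P_t : g_s ⊆ f }; (β) F*_s(r_f : f ∈ P_s) ≥ a·(1 − 2^(−2^(k+3))); (γ) for every partial function h from {0,…,N−1} to {0,1} with g_s ⊆ h and |dom(h) ∖ dom(g_s)| ≤ 2^(k+3), the quantity 2^(|dom(h)|−N) · Σ{ r_f : f ∈ P_s, h ⊆ f } lies in the interval [F*_s(r_f : f ∈ P_s), F*_s(r_f : f ∈ P_s)·(1 + 2^(−2^(k+3)))]. -/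

import Mathlib

namespace MeasuredCreatures

/-- The condition on the parameter function `φ = φ_k`:
`φ(0) = 2^(k+4)` and `φ(i+1) > 2^(2^(k+3)) + φ(i) + 2^(2k+7)/log₂(1 + 2^(−2^(2k+7)))`. -/
def PhiCond (k : ℕ) (φ : ℕ → ℕ) : Prop :=
  φ 0 = 2 ^ (k + 4) ∧
  ∀ i : ℕ, (φ (i + 1) : ℝ) >
    (2 : ℝ) ^ (2 ^ (k + 3)) + (φ i : ℝ) +
      (2 : ℝ) ^ (2 * k + 7) / Real.logb 2 (1 + ((2 : ℝ) ^ (2 ^ (2 * k + 7)))⁻¹)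

/-- `N = N_k = 2^(1+⌊log₂ φ(k+1)⌋)`. -/
def Nval (k : ℕ) (φ : ℕ → ℕ) : ℕ := 2 ^ (1 + Nat.log 2 (φ (k + 1)))

/-- The domain of a partial function `g` from `{0,…,N−1}` to `{0,1}`. -/
def pdom {N : ℕ} (g : Fin N → Option Bool) : Finset (Fin N) :=
  Finset.univ.filter fun i => (g i).isSome

/-- `g ⊆ g'` for partial functions. -/
def PSub {N : ℕ} (g g' : Fin N → Option Bool) : Prop :=
  ∀ (i : Fin N) (b : Bool), g i = some b → g' i = some b

/-- `g ⊆ f` for a partial function `g` and a total function `f`. -/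
def PSubF {N : ℕ} (g : Fin N → Option Bool) (f : Fin N → Bool) : Prop :=
  ∀ (i : Fin N) (b : Bool), g i = some b → f i = b

/-- A `k`-creature: a triple `(n, g, P)` with `n ≤ k` (the norm), `g` a partial function
from `{0,…,N−1}` to `{0,1}` with `|dom g| ≤ φ(k−n)`, and `P` a nonempty set of total
functions extending `g`. -/
structure Creature (k N : ℕ) (φ : ℕ → ℕ) where
  n : ℕ
  g : Fin N → Option Bool
  P : Finset (Fin N → Bool)
  n_le : n ≤ k
  g_card : (pdom g).card ≤ φ (k - n)
  P_ne : P.Nonempty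
  P_ext : ∀ f ∈ P, PSubF g f

/-- `s ∈ Σ*(t)`. -/
def SigmaRel {k N : ℕ} {φ : ℕ → ℕ} (s t : Creature k N φ) : Prop :=
  s.n ≤ t.n ∧ PSub t.g s.g ∧ s.P ⊆ t.P

open Classical in
/-- The averaging function
`F*_t(r) = min { 2^(|dom h|−N) · Σ{ r_f : f ∈ P_t, h ⊆ f } : g_t ⊆ h, |dom h ∖ dom g_t| ≤ 2^(k+3) }`. -/
noncomputable def Fstar {k N : ℕ} {φ : ℕ → ℕ} (t : Creature k N φ)
    (r : (Fin N → Bool) → ℝ) : ℝ :=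
  sInf {v : ℝ | ∃ h : Fin N → Option Bool,
    PSub t.g h ∧ (pdom h \ pdom t.g).card ≤ 2 ^ (k + 3) ∧
    v = (2 : ℝ) ^ (((pdom h).card : ℤ) - (N : ℤ)) *
      ∑ f ∈ t.P, (if PSubF h f then r f else 0)}

variable {N : ℕ}

lemma mem_pdom {g : Fin N → Option Bool} {i : Fin N} : i ∈ pdom g ↔ (g i).isSome := by
  simp [pdom]

lemma psub_refl (g : Fin N → Option Bool) : PSub g g := fun _ _ h => h

lemma psub_trans {g1 g2 g3 : Fin N → Option Bool} (h12 : PSub g1 g2) (h23 : PSub g2 g3) :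
    PSub g1 g3 := fun i b hb => h23 i b (h12 i b hb)

lemma psub_pdom {g1 g2 : Fin N → Option Bool} (h : PSub g1 g2) : pdom g1 ⊆ pdom g2 := by
  intro i hi
  rw [mem_pdom, Option.isSome_iff_exists] at *
  obtain ⟨b, hb⟩ := hi
  exact ⟨b, h i b hb⟩

lemma psubf_of_psub {g1 g2 : Fin N → Option Bool} {f : Fin N → Bool}
    (h : PSub g1 g2) (hf : PSubF g2 f) : PSubF g1 f := fun i b hb => hf i b (h i b hb)

lemma pdom_card_le (g : Fin N → Option Bool) : (pdom g).card ≤ N :=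
  le_trans (Finset.card_le_univ _) (by simp)

open Classical in
noncomputable def pval (P : Finset (Fin N → Bool)) (r : (Fin N → Bool) → ℝ)
    (g : Fin N → Option Bool) : ℝ :=
  (2 : ℝ) ^ (((pdom g).card : ℤ) - (N : ℤ)) * ∑ f ∈ P, (if PSubF g f then r f else 0)

open Classical in
lemma card_ext_le (g : Fin N → Option Bool) :
    (Finset.univ.filter fun f : Fin N → Bool => PSubF g f).card ≤ 2 ^ (N - (pdom g).card) := by
  classical
  have hmap : ∀ f ∈ Finset.univ.filter fun f : Fin N → Bool => PSubF g f,
      (fun (i : {i : Fin N // i ∉ pdom g}) => f i.1) ∈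
        (Finset.univ : Finset ({i : Fin N // i ∉ pdom g} → Bool)) := by
    intros; exact Finset.mem_univ _
  have hinj : Set.InjOn (fun (f : Fin N → Bool) (i : {i : Fin N // i ∉ pdom g}) => f i.1)
      (Finset.univ.filter fun f : Fin N → Bool => PSubF g f) := by
    intro f1 h1 f2 h2 heq
    simp only [Finset.coe_filter, Set.mem_setOf_eq] at h1 h2
    funext i
    by_cases hi : i ∈ pdom g
    · rw [mem_pdom, Option.isSome_iff_exists] at hi
      obtain ⟨b, hb⟩ := hi
      rw [h1.2 i b hb, h2.2 i b hb]
    · exact congrFun heq ⟨i, hi⟩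
  have hle := Finset.card_le_card_of_injOn _ hmap hinj
  calc (Finset.univ.filter fun f : Fin N → Bool => PSubF g f).card
      ≤ (Finset.univ : Finset ({i : Fin N // i ∉ pdom g} → Bool)).card := hle
    _ = 2 ^ (N - (pdom g).card) := by
        rw [Finset.card_univ, Fintype.card_fun, Fintype.card_subtype_compl]
        simp

open Classical in
lemma sum_ite_nonneg {P : Finset (Fin N → Bool)} {r : (Fin N → Bool) → ℝ}
    (hr : ∀ f ∈ P, 0 ≤ r f) (g : Fin N → Option Bool) :
    0 ≤ ∑ f ∈ P, (if PSubF g f then r f else 0) := by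
  apply Finset.sum_nonneg
  intro f hf
  split
  · exact hr f hf
  · exact le_rfl
    
open Classical in
lemma pval_nonneg {P : Finset (Fin N → Bool)} {r : (Fin N → Bool) → ℝ}
    (hr : ∀ f ∈ P, 0 ≤ r f) (g : Fin N → Option Bool) : 0 ≤ pval P r g :=
  mul_nonneg (by positivity) (sum_ite_nonneg hr g)

open Classical in
lemma pval_le_one {P : Finset (Fin N → Bool)} {r : (Fin N → Bool) → ℝ}
    (hr : ∀ f ∈ P, r f ∈ Set.Icc (0:ℝ) 1) (g : Fin N → Option Bool) : pval P r g ≤ 1 := by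
  classical
  have hd : (pdom g).card ≤ N := pdom_card_le g
  have h1 : ∑ f ∈ P, (if PSubF g f then r f else 0)
      ≤ ((2:ℝ) ^ (N - (pdom g).card : ℕ)) := by
    rw [← Finset.sum_filter]
    have h2 : ∑ f ∈ P.filter (fun f => PSubF g f), r f
        ≤ (P.filter (fun f => PSubF g f)).card • (1:ℝ) :=
      Finset.sum_le_card_nsmul _ _ 1 (fun f hf => (hr f (Finset.mem_filter.mp hf).1).2)
    rw [nsmul_eq_mul, mul_one] at h2
    refine h2.trans ?_
    have h3 : (P.filter (fun f => PSubF g f)).card ≤ 2 ^ (N - (pdom g).card) :=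
      le_trans (Finset.card_le_card
        (Finset.filter_subset_filter _ (Finset.subset_univ P))) (card_ext_le g)
    exact_mod_cast h3
  have h4 : (2:ℝ) ^ (((pdom g).card : ℤ) - (N : ℤ)) * (2:ℝ) ^ ((N - (pdom g).card : ℕ)) = 1 := by
    rw [← zpow_natCast (2:ℝ) (N - (pdom g).card), ← zpow_add₀ (two_ne_zero)]
    have he : ((pdom g).card : ℤ) - (N : ℤ) + ((N - (pdom g).card : ℕ) : ℤ) = 0 := by omega
    rw [he, zpow_zero]
  calc pval P r g ≤ (2:ℝ) ^ (((pdom g).card : ℤ) - (N : ℤ)) * (2:ℝ) ^ ((N - (pdom g).card : ℕ)) := by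
        exact mul_le_mul_of_nonneg_left h1 (by positivity)
    _ = 1 := h4

/-- Extension of a partial function by values on a set `S`. -/
def pext (g : Fin N → Option Bool) (S : Finset (Fin N)) (σ : {i : Fin N // i ∈ S} → Bool) :
    Fin N → Option Bool :=
  fun i => if h : i ∈ S then some (σ ⟨i, h⟩) else g i

lemma psub_pext {g : Fin N → Option Bool} {S : Finset (Fin N)}
    (hS : ∀ i ∈ S, g i = none) (σ : {i : Fin N // i ∈ S} → Bool) :
    PSub g (pext g S σ) := by
  intro i b hb
  unfold pext
  split
  · next hi => rw [hS i hi] at hb; exact absurd hb (by simp)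
  · exact hb

lemma pdom_pext {g : Fin N → Option Bool} {S : Finset (Fin N)}
    (hS : ∀ i ∈ S, g i = none) (σ : {i : Fin N // i ∈ S} → Bool) :
    pdom (pext g S σ) = pdom g ∪ S := by
  ext i
  by_cases hi : i ∈ S <;> simp [mem_pdom, pext, hi]

lemma pdom_disj {g : Fin N → Option Bool} {S : Finset (Fin N)}
    (hS : ∀ i ∈ S, g i = none) : Disjoint (pdom g) S := by
  rw [Finset.disjoint_left]
  intro i hi hiS
  rw [mem_pdom, hS i hiS] at hi
  simp at hi

lemma exists_pext_eq {g h : Fin N → Option Bool} (hgh : PSub g h) :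
    ∃ σ : {i : Fin N // i ∈ pdom h \ pdom g} → Bool, h = pext g (pdom h \ pdom g) σ := by
  refine ⟨fun i => (h i.1).iget, ?_⟩
  funext i
  unfold pext
  split
  · next hi =>
      have hih : i ∈ pdom h := (Finset.mem_sdiff.mp hi).1
      rw [mem_pdom, Option.isSome_iff_exists] at hih
      obtain ⟨b, hb⟩ := hih
      simp [hb]
  · next hi =>
      by_cases hig : i ∈ pdom g
      · rw [mem_pdom, Option.isSome_iff_exists] at hig
        obtain ⟨b, hb⟩ := hig
        rw [hb, hgh i b hb]
      · have hih : i ∉ pdom h := fun hmem => hi (Finset.mem_sdiff.mpr ⟨hmem, hig⟩)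
        rw [mem_pdom, Option.not_isSome_iff_eq_none] at hih hig
        rw [hih, hig]

open Classical in
lemma sum_pext (P : Finset (Fin N → Bool)) (r : (Fin N → Bool) → ℝ)
    (g : Fin N → Option Bool) (S : Finset (Fin N)) (hS : ∀ i ∈ S, g i = none) :
    ∑ σ : ({i : Fin N // i ∈ S} → Bool), (∑ f ∈ P, if PSubF (pext g S σ) f then r f else 0)
      = ∑ f ∈ P, (if PSubF g f then r f else 0) := by
  classical
  rw [Finset.sum_comm]
  refine Finset.sum_congr rfl fun f _ => ?_
  by_cases hg : PSubF g f
  · rw [if_pos hg]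
    rw [Finset.sum_eq_single (fun i : {i : Fin N // i ∈ S} => f i.1)]
    · rw [if_pos]
      intro i b hb
      unfold pext at hb
      split at hb
      · exact Option.some_inj.mp hb
      · exact hg i b hb
    · intro σ _ hne
      rw [if_neg]
      intro hP
      apply hne
      funext i
      have : pext g S σ i.1 = some (σ i) := by
        unfold pext
        rw [dif_pos i.2]
      exact (hP i.1 (σ i) this).symm ▸ rfl
    · intro hmem; exact absurd (Finset.mem_univ _) hmem
  · rw [if_neg hg]
    apply Finset.sum_eq_zero
    intro σ _
    rw [if_neg]
    intro hP
    exact hg (psubf_of_psub (psub_pext hS σ) hP)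

open Classical in
lemma sum_pval_pext (P : Finset (Fin N → Bool)) (r : (Fin N → Bool) → ℝ)
    (g : Fin N → Option Bool) (S : Finset (Fin N)) (hS : ∀ i ∈ S, g i = none) :
    ∑ σ : ({i : Fin N // i ∈ S} → Bool), pval P r (pext g S σ)
      = (2:ℝ) ^ S.card * pval P r g := by
  classical
  unfold pval
  have hcard : ∀ σ : ({i : Fin N // i ∈ S} → Bool),
      (pdom (pext g S σ)).card = (pdom g).card + S.card := by
    intro σ
    rw [pdom_pext hS, Finset.card_union_of_disjoint (pdom_disj hS)]
  calc ∑ σ : ({i : Fin N // i ∈ S} → Bool),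
        (2:ℝ) ^ (((pdom (pext g S σ)).card : ℤ) - (N : ℤ)) *
          ∑ f ∈ P, (if PSubF (pext g S σ) f then r f else 0)
      = (2:ℝ) ^ ((((pdom g).card + S.card : ℕ) : ℤ) - (N : ℤ)) *
        ∑ σ : ({i : Fin N // i ∈ S} → Bool),
          ∑ f ∈ P, (if PSubF (pext g S σ) f then r f else 0) := by
        rw [Finset.mul_sum]
        refine Finset.sum_congr rfl fun σ _ => ?_
        rw [hcard σ]
    _ = (2:ℝ) ^ ((((pdom g).card + S.card : ℕ) : ℤ) - (N : ℤ)) *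
        ∑ f ∈ P, (if PSubF g f then r f else 0) := by
        rw [sum_pext P r g S hS]
    _ = (2:ℝ) ^ S.card *
        ((2:ℝ) ^ (((pdom g).card : ℤ) - (N : ℤ)) * ∑ f ∈ P, (if PSubF g f then r f else 0)) := by
        rw [show ((((pdom g).card + S.card : ℕ)) : ℤ) - (N : ℤ)
            = (S.card : ℤ) + (((pdom g).card : ℤ) - (N : ℤ)) by push_cast; ring]
        rw [zpow_add₀ (two_ne_zero), zpow_natCast]
        ring

open Classical in
lemma pval_avg_ge (P : Finset (Fin N → Bool)) (r : (Fin N → Bool) → ℝ)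
    {g h : Fin N → Option Bool} (hgh : PSub g h) {c : ℝ}
    (hc : ∀ σ : ({i : Fin N // i ∈ pdom h \ pdom g} → Bool),
       pval P r (pext g (pdom h \ pdom g) σ) ≤ c) :
    (2:ℝ) ^ ((pdom h \ pdom g).card) * pval P r g
      - ((2:ℝ) ^ ((pdom h \ pdom g).card) - 1) * c ≤ pval P r h := by
  classical
  have hS : ∀ i ∈ (pdom h \ pdom g), g i = none := by
    intro i hi
    have h2 := (Finset.mem_sdiff.mp hi).2
    rw [mem_pdom, Option.not_isSome_iff_eq_none] at h2
    exact h2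
  obtain ⟨σ0, hσ0⟩ := exists_pext_eq hgh
  have hsum := sum_pval_pext P r g (pdom h \ pdom g) hS
  have hsplit := Finset.add_sum_erase (Finset.univ)
    (fun σ => pval P r (pext g (pdom h \ pdom g) σ)) (Finset.mem_univ σ0)
  have hcard : ((Finset.univ).erase σ0).card = 2 ^ (pdom h \ pdom g).card - 1 := by
    rw [Finset.card_erase_of_mem (Finset.mem_univ _), Finset.card_univ,
      Fintype.card_fun, Fintype.card_coe, Fintype.card_bool]
  have hle := Finset.sum_le_card_nsmul ((Finset.univ).erase σ0)
    (fun σ => pval P r (pext g (pdom h \ pdom g) σ)) c (fun σ _ => hc σ)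
  rw [hcard, nsmul_eq_mul] at hle
  have h1 : (1:ℕ) ≤ 2 ^ (pdom h \ pdom g).card := Nat.one_le_two_pow
  have hcast : ((2 ^ (pdom h \ pdom g).card - 1 : ℕ) : ℝ)
      = (2:ℝ) ^ (pdom h \ pdom g).card - 1 := by
    push_cast [h1]
    ring
  rw [hcast] at hle
  have heq : pval P r h = pval P r (pext g (pdom h \ pdom g) σ0) := by rw [← hσ0]
  rw [heq]
  linarith

lemma sdiff_card_chain {g1 g2 g3 : Fin N → Option Bool} :
    (pdom g3 \ pdom g1).card ≤ (pdom g2 \ pdom g1).card + (pdom g3 \ pdom g2).card := by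
  refine le_trans (Finset.card_le_card ?_) (Finset.card_union_le _ _)
  intro i hi
  rw [Finset.mem_sdiff] at hi
  rw [Finset.mem_union, Finset.mem_sdiff, Finset.mem_sdiff]
  by_cases hg2 : i ∈ pdom g2
  · exact Or.inl ⟨hg2, hi.2⟩
  · exact Or.inr ⟨hi.1, hg2⟩

open Classical in
lemma chain_lemma (P : Finset (Fin N → Bool)) (r : (Fin N → Bool) → ℝ)
    (hle1 : ∀ g : Fin N → Option Bool, pval P r g ≤ 1)
    (ε₀ a : ℝ) (hε₀ : 0 < ε₀) (ha : 0 < a) (M T : ℕ)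
    (hT : 1 < a * (1 + ε₀) ^ T)
    (g' : Fin N → Option Bool) (hg' : a ≤ pval P r g') :
    ∃ gs, PSub g' gs ∧ (pdom gs \ pdom g').card ≤ T * M ∧ a ≤ pval P r gs ∧
      ∀ h, PSub gs h → (pdom h \ pdom gs).card ≤ M →
        pval P r h ≤ (1 + ε₀) * pval P r gs := by
  have key : ∀ j, j ≤ T →
      (∃ g, PSub g' g ∧ (pdom g \ pdom g').card ≤ j * M ∧ a * (1 + ε₀) ^ j ≤ pval P r g) ∨
      (∃ gs, PSub g' gs ∧ (pdom gs \ pdom g').card ≤ T * M ∧ a ≤ pval P r gs ∧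
        ∀ h, PSub gs h → (pdom h \ pdom gs).card ≤ M →
          pval P r h ≤ (1 + ε₀) * pval P r gs) := by
    intro j
    induction j with
    | zero =>
        intro _
        left
        exact ⟨g', psub_refl g', by simp, by simpa using hg'⟩
    | succ n ih =>
        intro hn
        rcases ih (by omega) with ⟨g, hgg', hcard, hval⟩ | hgoal
        · by_cases himp : ∃ h, PSub g h ∧ (pdom h \ pdom g).card ≤ M ∧
              (1 + ε₀) * pval P r g < pval P r h
          · obtain ⟨h, h1, h2, h3⟩ := himp
            left
            refine ⟨h, psub_trans hgg' h1, ?_, ?_⟩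
            · have := sdiff_card_chain (g1 := g') (g2 := g) (g3 := h)
              have h4 : (n + 1) * M = n * M + M := by ring
              omega
            · have h5 : a * (1 + ε₀) ^ (n + 1) = (1 + ε₀) * (a * (1 + ε₀) ^ n) := by ring
              rw [h5]
              calc (1 + ε₀) * (a * (1 + ε₀) ^ n) ≤ (1 + ε₀) * pval P r g :=
                    mul_le_mul_of_nonneg_left hval (by linarith)
                _ ≤ pval P r h := h3.le
          · push_neg at himp
            right
            refine ⟨g, hgg', le_trans hcard (Nat.mul_le_mul_right M (by omega)), ?_, himp⟩
            calc a = a * 1 := (mul_one a).symm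
              _ ≤ a * (1 + ε₀) ^ n := by
                  apply mul_le_mul_of_nonneg_left _ ha.le
                  exact one_le_pow₀ (by linarith : (1:ℝ) ≤ 1 + ε₀)
              _ ≤ pval P r g := hval
        · right
          exact hgoal
  rcases key T le_rfl with ⟨g, _, _, hval⟩ | hgoal
  · exact absurd (lt_of_lt_of_le hT (hval.trans (hle1 g))) (lt_irrefl 1)
  · exact hgoal

lemma aux_k5 (k : ℕ) : k + 5 ≤ 2 ^ (k + 3) := by
  induction k with
  | zero => norm_num
  | succ n ih =>
      have : 2 ^ (n + 1 + 3) = 2 ^ (n + 3) * 2 := by rw [pow_succ]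
      omega

lemma num1 (k : ℕ) : 3 * ((2:ℝ)^(k+3)) ≤ (2:ℝ)^(2^(k+3)) := by
  have hn : 3 * 2^(k+3) ≤ 2^(2^(k+3)) := by
    have h1 : 3 * 2^(k+3) ≤ 2^(k+5) := by
      have : 2^(k+5) = 4 * 2^(k+3) := by ring
      have h2 : (1:ℕ) ≤ 2^(k+3) := Nat.one_le_two_pow
      omega
    exact h1.trans (Nat.pow_le_pow_right (by norm_num) (aux_k5 k))
  exact_mod_cast hn

lemma num4 (k : ℕ) : ((2:ℝ)^(k+3)) * ((2:ℝ)^(k+3)) ≤ (2:ℝ)^(2*k+7) := by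
  rw [← pow_add]
  apply pow_le_pow_right₀ one_le_two
  omega

lemma num2 (k : ℕ) : (2:ℝ)^(2^(k+3)) * ((2:ℝ)^(2^(2*k+7)))⁻¹ ≤ ((2:ℝ)^(2^(k+3)))⁻¹ := by
  set A := (2:ℝ)^(2^(k+3)) with hA
  set B := (2:ℝ)^(2^(2*k+7)) with hB
  have hApos : 0 < A := by positivity
  have hBpos : 0 < B := by positivity
  have hAB : A * A ≤ B := by
    rw [hA, hB, ← pow_add]
    apply pow_le_pow_right₀ one_le_two
    have h1 : 2^(k+3) + 2^(k+3) = 2^(k+4) := by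
      have : 2^(k+4) = 2^(k+3) * 2 := by rw [pow_succ]
      omega
    rw [h1]
    exact Nat.pow_le_pow_right (by norm_num) (by omega)
  have he : A * B⁻¹ = A / B := by ring
  rw [he, inv_eq_one_div, div_le_div_iff₀ hBpos hApos]
  nlinarith

lemma num5 (k : ℕ) : 4 * ((2:ℝ)^(2^(k+3)) * ((2:ℝ)^(2^(2*k+7)))⁻¹) ≤ ((2:ℝ)^(2^(k+3)))⁻¹ := by
  set A := (2:ℝ)^(2^(k+3)) with hA
  set B := (2:ℝ)^(2^(2*k+7)) with hB
  have hApos : 0 < A := by positivity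
  have hBpos : 0 < B := by positivity
  have hAB : 4 * (A * A) ≤ B := by
    rw [hA, hB, ← pow_add]
    have h4 : (4:ℝ) = 2^2 := by norm_num
    rw [h4, ← pow_add]
    apply pow_le_pow_right₀ one_le_two
    have h1 : 2 + (2^(k+3) + 2^(k+3)) = 2^(k+4) + 2 := by
      have : 2^(k+4) = 2^(k+3) * 2 := by rw [pow_succ]
      omega
    rw [h1]
    have h2 : 2^(k+4) + 2 ≤ 2^(k+5) := by
      have e1 : 2^(k+5) = 2^(k+4) * 2 := by rw [pow_succ]
      have h3 : (2:ℕ) ≤ 2^(k+4) := by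
        have := Nat.one_le_two_pow (n := k+3)
        have e2 : 2^(k+4) = 2^(k+3)*2 := by rw [pow_succ]
        omega
      omega
    exact h2.trans (Nat.pow_le_pow_right (by norm_num) (by omega))
  have he : 4 * (A * B⁻¹) = (4 * A) / B := by ring
  rw [he, inv_eq_one_div, div_le_div_iff₀ hBpos hApos]
  nlinarith

lemma num3 (k : ℕ) : (1 + ((2:ℝ)^(2^(2*k+7)))⁻¹)
    ≤ (1 - (2:ℝ)^(2^(k+3)) * ((2:ℝ)^(2^(2*k+7)))⁻¹) * (1 + ((2:ℝ)^(2^(k+3)))⁻¹) := by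
  set A := (2:ℝ)^(2^(k+3)) with hA
  set B := (2:ℝ)^(2^(2*k+7)) with hB
  have hApos : 0 < A := by positivity
  have hBpos : 0 < B := by positivity
  have hA1 : 1 ≤ A := one_le_pow₀ one_le_two
  have he1 : A⁻¹ ≤ 1 := by
    rw [inv_le_one_iff₀]; right; exact hA1
  have he0 : 0 < A⁻¹ := by positivity
  have hd0 : 0 < B⁻¹ := by positivity
  have h4 := num5 k
  rw [← hA, ← hB] at h4
  have hdAd : B⁻¹ ≤ A * B⁻¹ := le_mul_of_one_le_left hd0.le hA1
  have h5 : A * B⁻¹ * A⁻¹ ≤ A * B⁻¹ :=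
    mul_le_of_le_one_right (by positivity) he1
  nlinarith

lemma exists_T (k : ℕ) :
    ∃ T : ℕ, 1 < ((2:ℝ)^(2^(k+3)))⁻¹ * (1 + ((2:ℝ)^(2^(2*k+7)))⁻¹) ^ T ∧
      (T : ℝ) * (2:ℝ)^(k+3) + (2:ℝ)^(k+3)
        ≤ (2:ℝ)^(2^(k+3)) + (2:ℝ)^(2*k+7) / Real.logb 2 (1 + ((2:ℝ)^(2^(2*k+7)))⁻¹) := by
  set ε₀ : ℝ := ((2:ℝ)^(2^(2*k+7)))⁻¹ with hε₀def
  have hε₀pos : 0 < ε₀ := by positivity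
  set L : ℝ := Real.logb 2 (1 + ε₀) with hLdef
  have hL : 0 < L := Real.logb_pos one_lt_two (by linarith)
  set M : ℝ := (2:ℝ)^(k+3) with hMdef
  have hMpos : 0 < M := by positivity
  refine ⟨⌈M/L⌉₊ + 1, ?_, ?_⟩
  · have h2L : (2:ℝ) ^ L = 1 + ε₀ := Real.rpow_logb two_pos (by norm_num) (by positivity)
    have hexp : M < L * ((⌈M/L⌉₊ : ℝ) + 1) := by
      have hC := Nat.le_ceil (M/L)
      have h1 : M ≤ (⌈M/L⌉₊:ℝ) * L := (div_le_iff₀ hL).mp hC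
      nlinarith
    have hpow : (2:ℝ)^((2^(k+3):ℕ)) < (1+ε₀)^(⌈M/L⌉₊ + 1) := by
      have e1 : ((2:ℝ)^((2^(k+3):ℕ))) = (2:ℝ)^(((2^(k+3):ℕ)):ℝ) := (Real.rpow_natCast _ _).symm
      have e2 : (((2^(k+3):ℕ)):ℝ) = M := by rw [hMdef]; push_cast; ring
      have e3 : (2:ℝ)^(L * ((⌈M/L⌉₊ : ℝ) + 1)) = (1+ε₀)^(⌈M/L⌉₊ + 1) := by
        rw [Real.rpow_mul (le_of_lt two_pos), h2L]
        rw [show ((⌈M/L⌉₊ : ℝ) + 1) = ((⌈M/L⌉₊ + 1 : ℕ) : ℝ) by push_cast; ring]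
        rw [Real.rpow_natCast]
      rw [e1, e2, ← e3]
      exact (Real.rpow_lt_rpow_left_iff one_lt_two).mpr hexp
    have hApos : (0:ℝ) < (2:ℝ)^(2^(k+3)) := by positivity
    have := mul_lt_mul_of_pos_left hpow (inv_pos.mpr hApos)
    rwa [inv_mul_cancel₀ (ne_of_gt hApos)] at this
  · have hTle : ((⌈M/L⌉₊ + 1 : ℕ):ℝ) ≤ M/L + 2 := by
      have := Nat.ceil_lt_add_one (show (0:ℝ) ≤ M/L by positivity)
      push_cast
      linarith
    have h1 : ((⌈M/L⌉₊ + 1 : ℕ):ℝ) * M + M ≤ (M/L + 3) * M := by nlinarith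
    have h3 : M*M/L ≤ (2:ℝ)^(2*k+7)/L := by
      apply (div_le_div_iff_of_pos_right hL).mpr
      exact num4 k

    have h2 : (M/L+3)*M = M*M/L + 3*M := by ring
    have := num1 k
    rw [← hMdef] at this
    linarith



set_option maxHeartbeats 2000000 in
open Classical in
/-- Lemma 2.1 of the paper: improving a creature relative to `g'`. -/
theorem creature_improvement
    (k : ℕ) (φ : ℕ → ℕ) (hφ : PhiCond k φ)
    (t : Creature k (Nval k φ) φ) (ht : 2 ≤ t.n)
    (g' : Fin (Nval k φ) → Option Bool) (hg'1 : PSub t.g g')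
    (hg'2 : (pdom g' \ pdom t.g).card ≤ 2 ^ (k + 3))
    (r : (Fin (Nval k φ) → Bool) → ℝ) (hr : ∀ f ∈ t.P, r f ∈ Set.Icc (0 : ℝ) 1)
    (a : ℝ)
    (ha : a = (2 : ℝ) ^ (((pdom g').card : ℤ) - (Nval k φ : ℤ)) *
      ∑ f ∈ t.P, (if PSubF g' f then r f else 0))
    (haL : ((2 : ℝ) ^ (2 ^ (k + 3)))⁻¹ ≤ a) :
    ∃ s : Creature k (Nval k φ) φ, SigmaRel s t ∧
      s.n = t.n - 1 ∧ PSub g' s.g ∧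
      (∀ f : Fin (Nval k φ) → Bool, f ∈ s.P ↔ f ∈ t.P ∧ PSubF s.g f) ∧
      a * (1 - ((2 : ℝ) ^ (2 ^ (k + 3)))⁻¹) ≤ Fstar s r ∧
      ∀ h : Fin (Nval k φ) → Option Bool, PSub s.g h →
        (pdom h \ pdom s.g).card ≤ 2 ^ (k + 3) →
        (2 : ℝ) ^ (((pdom h).card : ℤ) - (Nval k φ : ℤ)) *
            (∑ f ∈ s.P, (if PSubF h f then r f else 0)) ∈
          Set.Icc (Fstar s r) (Fstar s r * (1 + ((2 : ℝ) ^ (2 ^ (k + 3)))⁻¹)) := by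
  classical
  have hr0 : ∀ f ∈ t.P, 0 ≤ r f := fun f hf => (hr f hf).1
  set ε₀ : ℝ := ((2:ℝ)^(2^(2*k+7)))⁻¹ with hε₀def
  have hε₀pos : 0 < ε₀ := by positivity
  have hApos : (0:ℝ) < (2:ℝ)^(2^(k+3)) := by positivity
  have hA1 : (1:ℝ) ≤ (2:ℝ)^(2^(k+3)) := one_le_pow₀ one_le_two
  have hAinv1 : ((2:ℝ)^(2^(k+3)))⁻¹ ≤ 1 := by
    rw [inv_le_one_iff₀]; right; exact hA1
  have hεpos : (0:ℝ) < ((2:ℝ)^(2^(k+3)))⁻¹ := by positivity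
  have ha0 : 0 < a := lt_of_lt_of_le hεpos haL
  obtain ⟨T, hT1, hT2⟩ := exists_T k
  have hstart : a ≤ pval t.P r g' := le_of_eq (by rw [ha]; rfl)
  have hT1' : 1 < a * (1 + ε₀) ^ T :=
    lt_of_lt_of_le hT1 (mul_le_mul_of_nonneg_right haL (by positivity))
  obtain ⟨gs, hgs1, hgs2, hgs3, hgs4⟩ :=
    chain_lemma t.P r (pval_le_one hr) ε₀ a hε₀pos ha0 (2^(k+3)) T hT1' g' hstart
  set v := pval t.P r gs with hv
  have hv0 : 0 ≤ v := pval_nonneg hr0 gs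
  have hva : a ≤ v := hgs3
  -- lower bound for bounded extensions of gs
  have hlow : ∀ h, PSub gs h → (pdom h \ pdom gs).card ≤ 2^(k+3) →
      v * (1 - (2:ℝ)^(2^(k+3)) * ε₀) ≤ pval t.P r h := by
    intro h hgh hcard
    have hS : ∀ i ∈ (pdom h \ pdom gs), gs i = none := by
      intro i hi
      have h2 := (Finset.mem_sdiff.mp hi).2
      rw [mem_pdom, Option.not_isSome_iff_eq_none] at h2
      exact h2
    have hc : ∀ σ : ({i // i ∈ pdom h \ pdom gs} → Bool),
        pval t.P r (pext gs (pdom h \ pdom gs) σ) ≤ (1+ε₀) * v := by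
      intro σ
      apply hgs4
      · exact psub_pext hS σ
      · have hps : pdom (pext gs (pdom h \ pdom gs) σ) \ pdom gs = pdom h \ pdom gs := by
          rw [pdom_pext hS]
          ext i
          simp only [Finset.mem_sdiff, Finset.mem_union]
          tauto
        rw [hps]
        exact hcard
    have havg := pval_avg_ge t.P r hgh hc
    have hdM : (2:ℝ)^((pdom h \ pdom gs).card) ≤ (2:ℝ)^(2^(k+3)) :=
      pow_le_pow_right₀ one_le_two hcard
    have h1d : (1:ℝ) ≤ (2:ℝ)^((pdom h \ pdom gs).card) := one_le_pow₀ one_le_two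
    nlinarith [mul_nonneg (mul_nonneg hv0 hε₀pos.le) (sub_nonneg.mpr hdM),
      mul_nonneg hv0 hε₀pos.le]
  set Ps : Finset (Fin (Nval k φ) → Bool) := t.P.filter (fun f => PSubF gs f) with hPsdef
  have hval_eq : ∀ h : Fin (Nval k φ) → Option Bool, PSub gs h →
      (∑ f ∈ Ps, if PSubF h f then r f else 0) = ∑ f ∈ t.P, (if PSubF h f then r f else 0) := by
    intro h hgh
    rw [hPsdef, Finset.sum_filter]
    refine Finset.sum_congr rfl fun f _ => ?_
    by_cases hP : PSubF h f
    · simp [hP, psubf_of_psub hgh hP]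
    · simp [hP]
  have hPs_eq : ∀ h : Fin (Nval k φ) → Option Bool, PSub gs h →
      (2:ℝ)^(((pdom h).card : ℤ) - (Nval k φ : ℤ)) * (∑ f ∈ Ps, if PSubF h f then r f else 0)
        = pval t.P r h := by
    intro h hgh
    unfold pval
    rw [hval_eq h hgh]
  have hPs_ne : Ps.Nonempty := by
    by_contra hemp
    rw [Finset.not_nonempty_iff_eq_empty] at hemp
    have h0 : (∑ f ∈ t.P, if PSubF gs f then r f else 0) = 0 := by
      rw [← hval_eq gs (psub_refl gs), hemp, Finset.sum_empty]
    have hv00 : v = 0 := by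
      rw [hv]
      unfold pval
      rw [h0, mul_zero]
    linarith
  -- cardinality bound
  have hcard_gs : (pdom gs).card ≤ φ (k - (t.n - 1)) := by
    have e1 : k - (t.n - 1) = (k - t.n) + 1 := by
      have := t.n_le
      omega
    have hφ2 := hφ.2 (k - t.n)
    have hb1 : (pdom gs).card ≤ (pdom g').card + T * 2^(k+3) := by
      have hsub : pdom gs ⊆ pdom g' ∪ (pdom gs \ pdom g') := by
        intro i hi
        rw [Finset.mem_union, Finset.mem_sdiff]
        by_cases hig : i ∈ pdom g' <;> tauto
      calc (pdom gs).card ≤ (pdom g' ∪ (pdom gs \ pdom g')).card := Finset.card_le_card hsub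
        _ ≤ (pdom g').card + (pdom gs \ pdom g').card := Finset.card_union_le _ _
        _ ≤ (pdom g').card + T * 2^(k+3) := by omega
    have hb2 : (pdom g').card ≤ φ (k - t.n) + 2^(k+3) := by
      have hsub : pdom g' ⊆ pdom t.g ∪ (pdom g' \ pdom t.g) := by
        intro i hi
        rw [Finset.mem_union, Finset.mem_sdiff]
        by_cases hig : i ∈ pdom t.g <;> tauto
      calc (pdom g').card ≤ (pdom t.g ∪ (pdom g' \ pdom t.g)).card := Finset.card_le_card hsub
        _ ≤ (pdom t.g).card + (pdom g' \ pdom t.g).card := Finset.card_union_le _ _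
        _ ≤ φ (k - t.n) + 2^(k+3) := by
            have := t.g_card
            omega
    have hreal : ((pdom gs).card : ℝ) < (φ ((k - t.n) + 1) : ℝ) := by
      have hc1 : ((pdom gs).card : ℝ) ≤ ((pdom g').card : ℝ) + (T : ℝ) * (2:ℝ)^(k+3) := by
        exact_mod_cast hb1
      have hc2 : ((pdom g').card : ℝ) ≤ (φ (k - t.n) : ℝ) + (2:ℝ)^(k+3) := by
        exact_mod_cast hb2
      linarith
    rw [e1]
    exact_mod_cast hreal.le
  have hn_le : t.n - 1 ≤ k := le_trans (Nat.sub_le _ _) t.n_le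
  have hPext : ∀ f ∈ Ps, PSubF gs f := fun f hf => (Finset.mem_filter.mp hf).2
  -- the Fstar set
  set VPs : Set ℝ := {w : ℝ | ∃ h : Fin (Nval k φ) → Option Bool,
    PSub gs h ∧ (pdom h \ pdom gs).card ≤ 2^(k+3) ∧
    w = (2:ℝ)^(((pdom h).card : ℤ) - (Nval k φ : ℤ)) *
      ∑ f ∈ Ps, (if PSubF h f then r f else 0)} with hVPsdef
  have hmem_self : pval t.P r gs ∈ VPs := by
    refine ⟨gs, psub_refl gs, by simp, ?_⟩
    rw [hPs_eq gs (psub_refl gs)]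
  have hne : VPs.Nonempty := ⟨_, hmem_self⟩
  have hbdd : BddBelow VPs := by
    refine ⟨v * (1 - (2:ℝ)^(2^(k+3)) * ε₀), ?_⟩
    rintro w ⟨h, h1, h2, h3⟩
    rw [h3, hPs_eq h h1]
    exact hlow h h1 h2
  have hlb : v * (1 - (2:ℝ)^(2^(k+3)) * ε₀) ≤ sInf VPs := by
    apply le_csInf hne
    rintro w ⟨h, h1, h2, h3⟩
    rw [h3, hPs_eq h h1]
    exact hlow h h1 h2
  have hub : sInf VPs ≤ v := csInf_le hbdd hmem_self
  have hAe := num2 k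
  have hkey := num3 k
  refine ⟨⟨t.n - 1, gs, Ps, hn_le, hcard_gs, hPs_ne, hPext⟩,
    ⟨Nat.sub_le _ _, psub_trans hg'1 hgs1, Finset.filter_subset _ _⟩,
    rfl, hgs1, fun f => Finset.mem_filter, ?_, ?_⟩
  · -- β
    show a * (1 - ((2:ℝ)^(2^(k+3)))⁻¹) ≤ sInf VPs
    have h1 : a * (1 - ((2:ℝ)^(2^(k+3)))⁻¹) ≤ a * (1 - (2:ℝ)^(2^(k+3)) * ε₀) :=
      mul_le_mul_of_nonneg_left (by linarith) ha0.le
    have h2 : a * (1 - (2:ℝ)^(2^(k+3)) * ε₀) ≤ v * (1 - (2:ℝ)^(2^(k+3)) * ε₀) :=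
      mul_le_mul_of_nonneg_right hva (by linarith)
    linarith
  · -- γ
    intro h h1 h2
    have h1' : PSub gs h := h1
    have h2' : (pdom h \ pdom gs).card ≤ 2^(k+3) := h2
    rw [Set.mem_Icc]
    constructor
    · show sInf VPs ≤ (2:ℝ)^(((pdom h).card : ℤ) - (Nval k φ : ℤ)) *
          (∑ f ∈ Ps, if PSubF h f then r f else 0)
      exact csInf_le hbdd ⟨h, h1', h2', rfl⟩
    · show (2:ℝ)^(((pdom h).card : ℤ) - (Nval k φ : ℤ)) *
          (∑ f ∈ Ps, if PSubF h f then r f else 0) ≤ sInf VPs * (1 + ((2:ℝ)^(2^(k+3)))⁻¹)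
      have hw : (2:ℝ)^(((pdom h).card : ℤ) - (Nval k φ : ℤ)) *
          (∑ f ∈ Ps, if PSubF h f then r f else 0) = pval t.P r h := hPs_eq h h1'
      rw [hw]
      have hup : pval t.P r h ≤ (1 + ε₀) * v := hgs4 h h1' h2'
      have hstep : (1 + ε₀) * v ≤ v * ((1 - (2:ℝ)^(2^(k+3)) * ε₀) * (1 + ((2:ℝ)^(2^(k+3)))⁻¹)) := by
        have := mul_le_mul_of_nonneg_left hkey hv0
        linarith [this]
      have hstep2 : v * ((1 - (2:ℝ)^(2^(k+3)) * ε₀) * (1 + ((2:ℝ)^(2^(k+3)))⁻¹))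
          ≤ sInf VPs * (1 + ((2:ℝ)^(2^(k+3)))⁻¹) := by
        have := mul_le_mul_of_nonneg_right hlb (by linarith : (0:ℝ) ≤ 1 + ((2:ℝ)^(2^(k+3)))⁻¹)
        linarith [this]
      linarith

end MeasuredCreatures
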